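/- Let ω > 0 and let q : ℝ → ℝ satisfy the differential equation q''(t) + ω²·q(t) = 0 on ℝ. Fix t ∈ ℝ and define, for h > 0, the truncation error T_h = (q(t+h) − 2q(t) + q(t−h))/h² + (ω²/24)·(q(t+h) + 22q(t) + q(t−h)) − (ω⁴h²/24)·q(t). Then T_h − (1/1440)·ω⁶·h⁴·q(t) = O(h⁶) as h → 0⁺; in particular the symplectic Simpson scheme is fourth order accurate in the sense of the truncation error. -/

import Mathlib

open Complex Finset in
lemma cos_taylor4 (x : ℝ) (hx : |x| ≤ 1) :
    |Real.cos x - (1 - x^2/2 + x^4/24)| ≤ |x|^6 := by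
  have habs : ‖(x:ℂ) * I‖ ≤ 1 := by simpa using hx
  have h := Complex.exp_bound habs (n := 6) (by norm_num)
  have hre : (∑ m ∈ range 6, ((x:ℂ) * I) ^ m / m.factorial).re
      = 1 - x^2/2 + x^4/24 := by
    simp [Finset.sum_range_succ, pow_succ, Nat.factorial]
    ring
  have key : |Real.cos x - (1 - x^2/2 + x^4/24)|
      = |(Complex.exp ((x:ℂ)*I) - ∑ m ∈ range 6, ((x:ℂ) * I) ^ m / m.factorial).re| := by
    rw [Complex.sub_re, hre, Complex.exp_ofReal_mul_I_re]
  rw [key]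
  calc |(Complex.exp ((x:ℂ)*I) - ∑ m ∈ range 6, ((x:ℂ) * I) ^ m / m.factorial).re|
      ≤ ‖Complex.exp ((x:ℂ)*I) - ∑ m ∈ range 6, ((x:ℂ) * I) ^ m / m.factorial‖ :=
        Complex.abs_re_le_norm _
    _ ≤ ‖(x:ℂ)*I‖ ^ 6 * ((7:ℝ) * ((Nat.factorial 6 : ℝ) * 6)⁻¹) := by
        simpa using h
    _ ≤ |x|^6 := by
        simp only [norm_mul, Complex.norm_I, Complex.norm_real, Real.norm_eq_abs, mul_one]
        have h6 : ((Nat.factorial 6 : ℝ)) = 720 := by norm_num [Nat.factorial]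
        rw [h6]
        nlinarith [pow_nonneg (abs_nonneg x) 6]

open Complex Finset in

lemma cos_taylor6 (x : ℝ) (hx : |x| ≤ 1) :
    |Real.cos x - (1 - x^2/2 + x^4/24 - x^6/720)| ≤ |x|^8 := by
  have habs : ‖(x:ℂ) * I‖ ≤ 1 := by simpa using hx
  have h := Complex.exp_bound habs (n := 8) (by norm_num)
  have hre : (∑ m ∈ range 8, ((x:ℂ) * I) ^ m / m.factorial).re
      = 1 - x^2/2 + x^4/24 - x^6/720 := by
    simp [Finset.sum_range_succ, pow_succ, Nat.factorial]
    ring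
  have key : |Real.cos x - (1 - x^2/2 + x^4/24 - x^6/720)|
      = |(Complex.exp ((x:ℂ)*I) - ∑ m ∈ range 8, ((x:ℂ) * I) ^ m / m.factorial).re| := by
    rw [Complex.sub_re, hre, Complex.exp_ofReal_mul_I_re]
  rw [key]
  calc |(Complex.exp ((x:ℂ)*I) - ∑ m ∈ range 8, ((x:ℂ) * I) ^ m / m.factorial).re|
      ≤ ‖Complex.exp ((x:ℂ)*I) - ∑ m ∈ range 8, ((x:ℂ) * I) ^ m / m.factorial‖ :=
        Complex.abs_re_le_norm _
    _ ≤ ‖(x:ℂ)*I‖ ^ 8 * ((9:ℝ) * ((Nat.factorial 8 : ℝ) * 8)⁻¹) := by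
        simpa using h
    _ ≤ |x|^8 := by
        simp only [norm_mul, Complex.norm_I, Complex.norm_real, Real.norm_eq_abs, mul_one]
        have h8 : ((Nat.factorial 8 : ℝ)) = 40320 := by norm_num [Nat.factorial]
        rw [h8]
        nlinarith [pow_nonneg (abs_nonneg x) 8]

lemma harmonic_sum (ω : ℝ) (hω : 0 < ω) (q : ℝ → ℝ)
    (hq1 : Differentiable ℝ q) (hq2 : Differentiable ℝ (deriv q))
    (hode : ∀ s : ℝ, deriv (deriv q) s + ω ^ 2 * q s = 0) (t : ℝ) :
    ∀ h : ℝ, q (t + h) + q (t - h) = 2 * Real.cos (ω * h) * q t := by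
  set a : ℝ → ℝ := fun s => q s * (ω * Real.sin (ω * s)) + deriv q s * Real.cos (ω * s) with ha
  set b : ℝ → ℝ := fun s => q s * (ω * Real.cos (ω * s)) - deriv q s * Real.sin (ω * s) with hb
  have hqd : ∀ s, HasDerivAt q (deriv q s) s := fun s => (hq1 s).hasDerivAt
  have hq'd : ∀ s, HasDerivAt (deriv q) (-(ω ^ 2 * q s)) s := by
    intro s
    have := (hq2 s).hasDerivAt
    have h2 : deriv (deriv q) s = -(ω ^ 2 * q s) := by linarith [hode s]
    rwa [h2] at this
  have hsin : ∀ s : ℝ, HasDerivAt (fun s => Real.sin (ω * s)) (ω * Real.cos (ω * s)) s := by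
    intro s
    simpa [mul_comm, Function.comp_def] using (Real.hasDerivAt_sin (ω * s)).comp s ((hasDerivAt_id s).const_mul ω)
  have hcos : ∀ s : ℝ, HasDerivAt (fun s => Real.cos (ω * s)) (-(ω * Real.sin (ω * s))) s := by
    intro s
    have := (Real.hasDerivAt_cos (ω * s)).comp s ((hasDerivAt_id s).const_mul ω)
    simpa [mul_comm, Function.comp_def] using this
  have hada : ∀ s, HasDerivAt a 0 s := by
    intro s
    have h1 := ((hqd s).mul ((hsin s).const_mul ω)).add ((hq'd s).mul (hcos s))
    have : deriv q s * (ω * Real.sin (ω * s)) + q s * (ω * (ω * Real.cos (ω * s))) +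
        (-(ω ^ 2 * q s) * Real.cos (ω * s) + deriv q s * -(ω * Real.sin (ω * s))) = 0 := by ring
    rw [this] at h1
    exact h1
  have hbdb : ∀ s, HasDerivAt b 0 s := by
    intro s
    have h1 := ((hqd s).mul ((hcos s).const_mul ω)).sub ((hq'd s).mul (hsin s))
    have : deriv q s * (ω * Real.cos (ω * s)) + q s * (ω * -(ω * Real.sin (ω * s))) -
        (-(ω ^ 2 * q s) * Real.sin (ω * s) + deriv q s * (ω * Real.cos (ω * s))) = 0 := by ring
    rw [this] at h1
    exact h1
  have haconst : ∀ s, a s = a t :=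
    fun s => is_const_of_deriv_eq_zero (fun x => (hada x).differentiableAt)
      (fun x => (hada x).deriv) s t
  have hbconst : ∀ s, b s = b t :=
    fun s => is_const_of_deriv_eq_zero (fun x => (hbdb x).differentiableAt)
      (fun x => (hbdb x).deriv) s t
  have hrep : ∀ s, ω * q s = a t * Real.sin (ω * s) + b t * Real.cos (ω * s) := by
    intro s
    rw [← haconst s, ← hbconst s]
    simp only [ha, hb]
    linear_combination (-(ω * q s)) * Real.sin_sq_add_cos_sq (ω * s)
  intro h
  have h1 := hrep (t + h)
  have h2 := hrep (t - h)
  have h3 := hrep t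
  rw [show ω * (t + h) = ω * t + ω * h from by ring, Real.sin_add, Real.cos_add] at h1
  rw [show ω * (t - h) = ω * t - ω * h from by ring, Real.sin_sub, Real.cos_sub] at h2
  have : ω * (q (t + h) + q (t - h)) = ω * (2 * Real.cos (ω * h) * q t) := by
    linear_combination h1 + h2 - 2 * Real.cos (ω * h) * h3
  exact mul_left_cancel₀ (ne_of_gt hω) this

/-- The symplectic Simpson scheme is fourth order accurate in the sense of the
truncation error: substituting an exact solution of the harmonic oscillator,
the truncation error equals (1/1440)·ω⁶·h⁴·q(t) up to O(h⁶). -/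
theorem simpson_scheme_truncation_error
    (ω : ℝ) (hω : 0 < ω) (q : ℝ → ℝ)
    (hq1 : Differentiable ℝ q)
    (hq2 : Differentiable ℝ (deriv q))
    (hode : ∀ s : ℝ, deriv (deriv q) s + ω ^ 2 * q s = 0)
    (t : ℝ) :
    ∃ C > (0:ℝ), ∃ h₀ > (0:ℝ), ∀ h : ℝ, 0 < h → h < h₀ →
      |((q (t + h) - 2 * q t + q (t - h)) / h ^ 2
          + (ω ^ 2 / 24) * (q (t + h) + 22 * q t + q (t - h))
          - (ω ^ 4 * h ^ 2 / 24) * q t)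
        - (1 / 1440) * ω ^ 6 * h ^ 4 * q t| ≤ C * h ^ 6 := by
  have hsum := harmonic_sum ω hω q hq1 hq2 hode t
  refine ⟨3 * ω ^ 8 * |q t| + 1, by positivity, 1 / ω, by positivity, fun h hh hhω => ?_⟩
  have hne : h ≠ 0 := ne_of_gt hh
  set x := ω * h with hx
  have hx0 : 0 < x := by positivity
  have hx1 : |x| ≤ 1 := by
    rw [abs_of_pos hx0, hx]
    calc ω * h ≤ ω * (1 / ω) := by nlinarith
      _ = 1 := by field_simp
  set E6 := Real.cos x - (1 - x^2/2 + x^4/24 - x^6/720) with hE6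
  set E4 := Real.cos x - (1 - x^2/2 + x^4/24) with hE4
  have hb6 : |E6| ≤ x ^ 8 := by
    have := cos_taylor6 x hx1
    rwa [abs_of_pos hx0] at this
  have hb4 : |E4| ≤ x ^ 6 := by
    have := cos_taylor4 x hx1
    rwa [abs_of_pos hx0] at this
  -- rewrite the truncation error using the exact solution formula
  have hqq : q (t + h) + q (t - h) = 2 * Real.cos x * q t := hsum h
  have hmain : ((q (t + h) - 2 * q t + q (t - h)) / h ^ 2
          + (ω ^ 2 / 24) * (q (t + h) + 22 * q t + q (t - h))
          - (ω ^ 4 * h ^ 2 / 24) * q t)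
        - (1 / 1440) * ω ^ 6 * h ^ 4 * q t
      = q t * (2 * E6 / h ^ 2 + ω ^ 2 / 12 * E4) := by
    have hq1 : q (t + h) = 2 * Real.cos x * q t - q (t - h) := by linarith
    rw [hq1, hE6, hE4, hx]
    field_simp
    ring
  rw [hmain, abs_mul]
  have hx8 : x ^ 8 = ω ^ 8 * h ^ 8 := by rw [hx]; ring
  have hx6 : x ^ 6 = ω ^ 6 * h ^ 6 := by rw [hx]; ring
  have hbound : |2 * E6 / h ^ 2 + ω ^ 2 / 12 * E4| ≤ 3 * ω ^ 8 * h ^ 6 := by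
    calc |2 * E6 / h ^ 2 + ω ^ 2 / 12 * E4|
        ≤ |2 * E6 / h ^ 2| + |ω ^ 2 / 12 * E4| := abs_add_le _ _
      _ = 2 * |E6| / h ^ 2 + ω ^ 2 / 12 * |E4| := by
          rw [abs_div, abs_mul, abs_mul]
          simp [abs_of_pos hh, abs_of_pos (pow_pos hh 2), abs_of_nonneg (by positivity : (0:ℝ) ≤ ω ^ 2 / 12)]
      _ ≤ 2 * (ω ^ 8 * h ^ 8) / h ^ 2 + ω ^ 2 / 12 * (ω ^ 6 * h ^ 6) := by
          gcongr
          · rw [← hx8]; exact hb6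
          · rw [← hx6]; exact hb4
      _ = (2 + 1/12) * ω ^ 8 * h ^ 6 := by field_simp
      _ ≤ 3 * ω ^ 8 * h ^ 6 := by nlinarith [pow_pos hω 8, pow_pos hh 6]
  calc |q t| * |2 * E6 / h ^ 2 + ω ^ 2 / 12 * E4|
      ≤ |q t| * (3 * ω ^ 8 * h ^ 6) := by gcongr
    _ = 3 * ω ^ 8 * |q t| * h ^ 6 := by ring
    _ ≤ (3 * ω ^ 8 * |q t| + 1) * h ^ 6 := by nlinarith [pow_pos hh 6]
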